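/- If G is a connected finite hypergraph with e(G) = v(G), then G has at least two distinct good orientations. -/

import Mathlib

/-- A hypergraph (with edges given by vertex finsets) is connected: any two vertices
are joined by a path. -/
def HConnected {V E : Type*} (H : E → Finset V) : Prop :=
  ∀ u v : V, Relation.ReflTransGen (fun p q => ∃ e, p ∈ H e ∧ q ∈ H e) u v

/-- A good orientation of a hypergraph: a surjection `o` from vertices to edges with
`o v` an edge containing `v`, and with exactly `|e| - 1` vertices mapped to each edge. -/
def GoodOrientation {V E : Type*} [Fintype V] [DecidableEq E]
    (H : E → Finset V) (o : V → E) : Prop :=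
  Function.Surjective o ∧ (∀ v, v ∈ H (o v)) ∧
    ∀ e, (Finset.univ.filter fun v => o v = e).card = (H e).card - 1


set_option linter.unusedSectionVars false
open Finset

section TwoGoodAux
variable {V E : Type*} [DecidableEq E] [DecidableEq V]

def HStep (H : E → Finset V) (F : Finset E) (S : Finset V) (p q : V) : Prop :=
  ∃ e ∈ F, p ∈ H e ∧ p ∈ S ∧ q ∈ H e ∧ q ∈ S

lemma hstep_symm {H : E → Finset V} {F : Finset E} {S : Finset V} {p q : V}
    (h : HStep H F S p q) : HStep H F S q p := by
  obtain ⟨e, he, h1, h2, h3, h4⟩ := h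
  exact ⟨e, he, h3, h4, h1, h2⟩

lemma hrel_symm {H : E → Finset V} {F : Finset E} {S : Finset V} {p q : V}
    (h : Relation.ReflTransGen (HStep H F S) p q) :
    Relation.ReflTransGen (HStep H F S) q p :=
  haveI : Std.Symm (HStep H F S) := ⟨fun _ _ h => hstep_symm h⟩
  Std.Symm.symm (r := Relation.ReflTransGen (HStep H F S)) _ _ h

lemma hrel_mono {H : E → Finset V} {F F' : Finset E} {S : Finset V} (hFF : F ⊆ F') {p q : V}
    (h : Relation.ReflTransGen (HStep H F S) p q) :
    Relation.ReflTransGen (HStep H F' S) p q := by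
  refine Relation.ReflTransGen.mono ?_ _ _ h
  rintro x y ⟨e, he, h1⟩
  exact ⟨e, hFF he, h1⟩

lemma hrel_insert_cases {H : E → Finset V} {F : Finset E} {S : Finset V} {a : E} {x y : V}
    (h : Relation.ReflTransGen (HStep H (insert a F) S) x y) :
    Relation.ReflTransGen (HStep H F S) x y ∨
      ((∃ u, u ∈ H a ∧ u ∈ S ∧ Relation.ReflTransGen (HStep H F S) x u) ∧
       (∃ u, u ∈ H a ∧ u ∈ S ∧ Relation.ReflTransGen (HStep H F S) y u)) := by
  induction h with
  | refl => exact Or.inl Relation.ReflTransGen.refl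
  | tail hxb hbc ih =>
    rename_i b c
    obtain ⟨e, he, hb1, hb2, hc1, hc2⟩ := hbc
    rcases Finset.mem_insert.mp he with rfl | heF
    · refine Or.inr ⟨?_, ⟨c, hc1, hc2, Relation.ReflTransGen.refl⟩⟩
      rcases ih with h | ⟨hx, _⟩
      · exact ⟨b, hb1, hb2, h⟩
      · exact hx
    · rcases ih with h | ⟨hx, hy⟩
      · exact Or.inl (h.tail ⟨e, heF, hb1, hb2, hc1, hc2⟩)
      · refine Or.inr ⟨hx, ?_⟩
        obtain ⟨u, hu1, hu2, hbu⟩ := hy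
        exact ⟨u, hu1, hu2, (hrel_symm (Relation.ReflTransGen.single ⟨e, heF, hb1, hb2, hc1, hc2⟩)).trans hbu⟩

/-- Representatives of connected components, with the component-count bound. -/
lemma exists_reps (H : E → Finset V) (S : Finset V) (F : Finset E) :
    ∃ R : Finset V, R ⊆ S ∧
      (∀ v ∈ S, ∃ r ∈ R, Relation.ReflTransGen (HStep H F S) r v) ∧
      (∀ r ∈ R, ∀ r' ∈ R, Relation.ReflTransGen (HStep H F S) r r' → r = r') ∧
      S.card ≤ R.card + ∑ e ∈ F, ((H e ∩ S).card - 1) := by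
  induction F using Finset.induction_on with
  | empty =>
    refine ⟨S, Finset.Subset.refl S, fun v hv => ⟨v, hv, Relation.ReflTransGen.refl⟩, ?_, by simp⟩
    intro r _ r' _ h
    rcases Relation.ReflTransGen.cases_head h with h | ⟨c, hc, _⟩
    · exact h
    · exact absurd hc (by rintro ⟨e, he, _⟩; exact absurd he (Finset.notMem_empty e))
  | insert _ _ ha ih =>
    rename_i a F
    obtain ⟨R, hRS, hcov, hdist, hcard⟩ := ih
    by_cases hp : (H a ∩ S).Nonempty
    · -- the piece is nonempty
      obtain ⟨y₀, hy₀⟩ := hp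
      have hy₀a : y₀ ∈ H a := (Finset.mem_inter.mp hy₀).1
      have hy₀S : y₀ ∈ S := (Finset.mem_inter.mp hy₀).2
      obtain ⟨rs, hrsR, hrsy₀⟩ := hcov y₀ hy₀S
      -- reps whose component meets the piece
      classical
      set R₁ := R.filter (fun r => ∃ u, u ∈ H a ∧ u ∈ S ∧ Relation.ReflTransGen (HStep H F S) r u) with hR₁
      have hrsR₁ : rs ∈ R₁ := Finset.mem_filter.mpr ⟨hrsR, y₀, hy₀a, hy₀S, hrsy₀⟩
      refine ⟨insert rs (R \ R₁), ?_, ?_, ?_, ?_⟩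
      · intro r hr
        rcases Finset.mem_insert.mp hr with rfl | hr
        · exact hRS hrsR
        · exact hRS (Finset.mem_sdiff.mp hr).1
      · -- coverage
        intro v hv
        obtain ⟨r, hrR, hrv⟩ := hcov v hv
        by_cases hrR₁ : r ∈ R₁
        · refine ⟨rs, Finset.mem_insert_self _ _, ?_⟩
          obtain ⟨-, u, hu1, hu2, hru⟩ := Finset.mem_filter.mp hrR₁
          have h1 : Relation.ReflTransGen (HStep H (insert a F) S) rs y₀ := hrel_mono (Finset.subset_insert a F) hrsy₀
          have h2 : Relation.ReflTransGen (HStep H (insert a F) S) y₀ u :=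
            Relation.ReflTransGen.single ⟨a, Finset.mem_insert_self a F, hy₀a, hy₀S, hu1, hu2⟩
          have h3 : Relation.ReflTransGen (HStep H (insert a F) S) u r := hrel_symm (hrel_mono (Finset.subset_insert a F) hru)
          exact (h1.trans (h2.trans h3)).trans (hrel_mono (Finset.subset_insert a F) hrv)
        · exact ⟨r, Finset.mem_insert_of_mem (Finset.mem_sdiff.mpr ⟨hrR, hrR₁⟩), hrel_mono (Finset.subset_insert a F) hrv⟩
      · -- distinctness
        intro r hr r' hr' hrel
        have hmem : ∀ s ∈ insert rs (R \ R₁), s ∈ R := by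
          intro s hs
          rcases Finset.mem_insert.mp hs with rfl | hs
          · exact hrsR
          · exact (Finset.mem_sdiff.mp hs).1
        rcases hrel_insert_cases hrel with h | ⟨hx, hy⟩
        · exact hdist r (hmem r hr) r' (hmem r' hr') h
        · -- both reach the piece: both must be rs
          have key : ∀ s ∈ insert rs (R \ R₁),
              (∃ u, u ∈ H a ∧ u ∈ S ∧ Relation.ReflTransGen (HStep H F S) s u) → s = rs := by
            intro s hs hreach
            rcases Finset.mem_insert.mp hs with rfl | hs
            · rfl
            · exact absurd (Finset.mem_filter.mpr ⟨(Finset.mem_sdiff.mp hs).1, hreach⟩)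
                (Finset.mem_sdiff.mp hs).2
          rw [key r hr hx, key r' hr' hy]
      · -- cardinality
        have hsum : ∑ e ∈ insert a F, ((H e ∩ S).card - 1)
            = ((H a ∩ S).card - 1) + ∑ e ∈ F, ((H e ∩ S).card - 1) :=
          Finset.sum_insert ha
        -- |R₁| ≤ |H a ∩ S| via injective choice of witness
        have hR₁card : R₁.card ≤ (H a ∩ S).card := by
          have : ∀ r ∈ R₁, ∃ u ∈ H a ∩ S, Relation.ReflTransGen (HStep H F S) r u := by
            intro r hr
            obtain ⟨-, u, h1, h2, h3⟩ := Finset.mem_filter.mp hr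
            exact ⟨u, Finset.mem_inter.mpr ⟨h1, h2⟩, h3⟩
          choose w hw hwrel using this
          refine Finset.card_le_card_of_injOn (fun r => if h : r ∈ R₁ then w r h else y₀) ?_ ?_
          · intro r hr
            simp only [Finset.mem_coe] at hr
            simp only [hr, dif_pos]
            exact hw r hr
          · intro r hr r' hr' hEq
            simp only [Finset.mem_coe] at hr hr'
            simp only [hr, hr', dif_pos] at hEq
            have h1 := hwrel r hr
            have h2 := hwrel r' hr'
            rw [hEq] at h1
            exact hdist r (Finset.mem_filter.mp hr).1 r' (Finset.mem_filter.mp hr').1 (h1.trans (hrel_symm h2))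
        have hR₁ne : 1 ≤ R₁.card := Finset.card_pos.mpr ⟨rs, hrsR₁⟩
        have hRsplit : R.card ≤ (R \ R₁).card + R₁.card := by
          have := Finset.card_le_card_sdiff_add_card (s := R) (t := R₁)
          omega
        have hins : (insert rs (R \ R₁)).card = (R \ R₁).card + 1 := by
          rw [Finset.card_insert_of_notMem]
          intro h
          exact (Finset.mem_sdiff.mp h).2 hrsR₁
        omega
    · -- piece empty : relation unchanged
      have hiff : ∀ p q, HStep H (insert a F) S p q ↔ HStep H F S p q := by
        intro p q
        constructor
        · rintro ⟨e, he, h1, h2, h3, h4⟩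
          rcases Finset.mem_insert.mp he with rfl | heF
          · exact absurd ⟨h1, h2⟩ (fun h => hp ⟨p, Finset.mem_inter.mpr h⟩)
          · exact ⟨e, heF, h1, h2, h3, h4⟩
        · rintro ⟨e, he, h⟩; exact ⟨e, Finset.mem_insert_of_mem he, h⟩
      have hreleq : ∀ p q, Relation.ReflTransGen (HStep H (insert a F) S) p q ↔
          Relation.ReflTransGen (HStep H F S) p q := by
        intro p q
        constructor
        · intro h; exact Relation.ReflTransGen.mono (fun x y hxy => (hiff x y).mp hxy) _ _ h
        · intro h; exact Relation.ReflTransGen.mono (fun x y hxy => (hiff x y).mpr hxy) _ _ h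
      refine ⟨R, hRS, ?_, ?_, ?_⟩
      · intro v hv; obtain ⟨r, h1, h2⟩ := hcov v hv; exact ⟨r, h1, (hreleq r v).mpr h2⟩
      · intro r hr r' hr' h; exact hdist r hr r' hr' ((hreleq r r').mp h)
      · rw [Finset.sum_insert ha]
        have : (H a ∩ S).card = 0 := by
          rw [Finset.card_eq_zero]
          exact Finset.not_nonempty_iff_eq_empty.mp hp
        omega

end TwoGoodAux

section TwoGoodAux2
variable {V E : Type*} [DecidableEq E] [DecidableEq V] [Fintype V] [Fintype E]

/-- From a vertex of `s`, a global path leading outside `s` yields a crossing edge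
whose inside part is reachable. -/
lemma crossing_edge {H : E → Finset V} {s : Finset V} {x w : V} [Fintype E]
    (hx : x ∈ s) (hw : w ∉ s)
    (hpath : Relation.ReflTransGen (fun p q => ∃ e, p ∈ H e ∧ q ∈ H e) x w) :
    ∃ e y, y ∈ H e ∧ y ∈ s ∧
      Relation.ReflTransGen (HStep H (univ.filter (fun e => ((H e) ∩ s).Nonempty)) s) x y ∧
      ∃ w', w' ∈ H e ∧ w' ∉ s := by
  set F₀ := univ.filter (fun e => ((H e) ∩ s).Nonempty) with hF₀
  have key : ∀ z, Relation.ReflTransGen (fun p q => ∃ e, p ∈ H e ∧ q ∈ H e) x z →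
      (z ∈ s ∧ Relation.ReflTransGen (HStep H F₀ s) x z) ∨
      (∃ e y, y ∈ H e ∧ y ∈ s ∧ Relation.ReflTransGen (HStep H F₀ s) x y ∧
        ∃ w', w' ∈ H e ∧ w' ∉ s) := by
    intro z hz
    induction hz with
    | refl => exact Or.inl ⟨hx, Relation.ReflTransGen.refl⟩
    | tail hxb hbc ih =>
      rename_i b c
      rcases ih with ⟨hbs, hrel⟩ | hdone
      · obtain ⟨e', hb', hc'⟩ := hbc
        by_cases hcs : c ∈ s
        · have he'F : e' ∈ F₀ := by
            rw [hF₀]; exact Finset.mem_filter.mpr ⟨Finset.mem_univ _, ⟨b, Finset.mem_inter.mpr ⟨hb', hbs⟩⟩⟩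
          exact Or.inl ⟨hcs, hrel.tail ⟨e', he'F, hb', hbs, hc', hcs⟩⟩
        · exact Or.inr ⟨e', b, hb', hbs, hrel, c, hc', hcs⟩
      · exact Or.inr hdone
  rcases key w hpath with ⟨hws, _⟩ | hdone
  · exact absurd hws hw
  · exact hdone

lemma hall_condition (H : E → Finset V) [Fintype V] [Fintype E]
    (hcard : ∀ e, 2 ≤ (H e).card) (hconn : HConnected H)
    (heq : ∑ e : E, ((H e).card - 1) = Fintype.card V)
    (s : Finset V) :
    s.card ≤ ∑ e ∈ univ.filter (fun e => ((H e) ∩ s).Nonempty), ((H e).card - 1) := by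
  set F₀ := univ.filter (fun e => ((H e) ∩ s).Nonempty) with hF₀
  rcases s.eq_empty_or_nonempty with rfl | hsne
  · simp
  have hE : Nonempty E := by
    rcases isEmpty_or_nonempty E with h | h
    · obtain ⟨v, _⟩ := hsne
      have : 0 < Fintype.card V := Fintype.card_pos_iff.mpr ⟨v⟩
      rw [Finset.univ_eq_empty, Finset.sum_empty] at heq
      omega
    · exact h
  obtain ⟨e₀⟩ := hE
  by_cases hsw : ∃ w, w ∉ s
  · obtain ⟨w, hw⟩ := hsw
    obtain ⟨R, hRS, hcov, hdist, hcard'⟩ := exists_reps H s F₀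
    -- each representative has a crossing edge
    have hcross : ∀ r ∈ R, ∃ e, (∃ y, y ∈ H e ∧ y ∈ s ∧
        Relation.ReflTransGen (HStep H F₀ s) r y) ∧ ∃ w', w' ∈ H e ∧ w' ∉ s := by
      intro r hr
      obtain ⟨e, y, h1, h2, h3, h4⟩ := crossing_edge (hRS hr) hw (hconn r w)
      exact ⟨e, ⟨y, h1, h2, h3⟩, h4⟩
    choose ce hcey hcew using hcross
    have hceF : ∀ r (hr : r ∈ R), ce r hr ∈ F₀.filter (fun e => ((H e) \ s).Nonempty) := by
      intro r hr
      obtain ⟨y, h1, h2, _⟩ := hcey r hr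
      obtain ⟨w', hw1, hw2⟩ := hcew r hr
      refine Finset.mem_filter.mpr ⟨?_, ⟨w', Finset.mem_sdiff.mpr ⟨hw1, hw2⟩⟩⟩
      rw [hF₀]; exact Finset.mem_filter.mpr ⟨Finset.mem_univ _, ⟨y, Finset.mem_inter.mpr ⟨h1, h2⟩⟩⟩
    have hRcard : R.card ≤ (F₀.filter (fun e => ((H e) \ s).Nonempty)).card := by
      classical
      refine Finset.card_le_card_of_injOn (fun r => if h : r ∈ R then ce r h else e₀) ?_ ?_
      · intro r hr; simp only [Finset.mem_coe] at hr; simp only [hr, dif_pos]; exact hceF r hr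
      · intro r hr r' hr' hEq
        simp only [Finset.mem_coe] at hr hr'
        simp only [hr, hr', dif_pos] at hEq
        obtain ⟨y, hy1, hy2, hy3⟩ := hcey r hr
        obtain ⟨y', hy1', hy2', hy3'⟩ := hcey r' hr'
        have heF : ce r hr ∈ F₀ := (Finset.mem_filter.mp (hceF r hr)).1
        have hstep : HStep H F₀ s y y' := by
          refine ⟨ce r hr, heF, hy1, hy2, ?_, hy2'⟩
          rw [hEq]; exact hy1'
        exact hdist r hr r' hr' ((hy3.tail hstep).trans (hrel_symm hy3'))
    have hfilter_sum : (F₀.filter (fun e => ((H e) \ s).Nonempty)).card ≤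
        ∑ e ∈ F₀, ((H e) \ s).card := by
      rw [Finset.card_eq_sum_ones]
      calc ∑ _e ∈ F₀.filter (fun e => ((H e) \ s).Nonempty), 1
          ≤ ∑ e ∈ F₀.filter (fun e => ((H e) \ s).Nonempty), ((H e) \ s).card := by
            refine Finset.sum_le_sum ?_
            intro e he
            exact Finset.card_pos.mpr (Finset.mem_filter.mp he).2
        _ ≤ ∑ e ∈ F₀, ((H e) \ s).card := Finset.sum_le_sum_of_subset (Finset.filter_subset _ _)
    have hper : ∀ e ∈ F₀, ((H e ∩ s).card - 1) + ((H e) \ s).card = (H e).card - 1 := by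
      intro e he
      have h1 : (H e ∩ s).card + ((H e) \ s).card = (H e).card := Finset.card_inter_add_card_sdiff _ _
      have h2 : 1 ≤ (H e ∩ s).card := Finset.card_pos.mpr (Finset.mem_filter.mp he).2
      omega
    calc s.card ≤ R.card + ∑ e ∈ F₀, ((H e ∩ s).card - 1) := hcard'
      _ ≤ ∑ e ∈ F₀, ((H e) \ s).card + ∑ e ∈ F₀, ((H e ∩ s).card - 1) := by
          exact Nat.add_le_add_right (le_trans hRcard hfilter_sum) _
      _ = ∑ e ∈ F₀, (((H e ∩ s).card - 1) + ((H e) \ s).card) := by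
          rw [← Finset.sum_add_distrib]
          exact Finset.sum_congr rfl (fun x _ => Nat.add_comm _ _)
      _ = ∑ e ∈ F₀, ((H e).card - 1) := Finset.sum_congr rfl hper
  · -- s = univ
    push_neg at hsw
    have hs : s = univ := Finset.eq_univ_iff_forall.mpr hsw
    have hF : F₀ = univ := by
      rw [hF₀]
      refine Finset.eq_univ_iff_forall.mpr ?_
      intro e
      refine Finset.mem_filter.mpr ⟨Finset.mem_univ _, ?_⟩
      have : (H e).Nonempty := Finset.card_pos.mp (by have := hcard e; omega)
      obtain ⟨v, hv⟩ := this
      exact ⟨v, Finset.mem_inter.mpr ⟨hv, hs ▸ Finset.mem_univ v⟩⟩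
    rw [hF, hs, heq]
    simp [Finset.card_univ]
end TwoGoodAux2

section TwoGoodAux3
variable {V E : Type*} [DecidableEq E] [Fintype V] [Fintype E]

/-- cardinality of a "vertical" subset of the slot type -/
lemma slot_filter_card (H : E → Finset V) (Q : E → Prop) [DecidablePred Q] :
    (univ.filter (fun p : Σ e : E, Fin ((H e).card - 1) => Q p.1)).card
      = ∑ e ∈ univ.filter Q, ((H e).card - 1) := by
  classical
  have : (univ.filter (fun p : Σ e : E, Fin ((H e).card - 1) => Q p.1))
      = (univ.filter Q).sigma (fun e => (univ : Finset (Fin ((H e).card - 1)))) := by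
    ext ⟨e, i⟩
    simp [Finset.mem_sigma]
  rw [this, Finset.card_sigma]
  exact Finset.sum_congr rfl (fun e _ => by simp)

lemma exists_good (H : E → Finset V)
    (hcard : ∀ e, 2 ≤ (H e).card)
    (hconn : ∀ u v : V, Relation.ReflTransGen (fun p q => ∃ e, p ∈ H e ∧ q ∈ H e) u v)
    (heq : ∑ e : E, ((H e).card - 1) = Fintype.card V) :
    ∃ o : V → E, (∀ v, v ∈ H (o v)) ∧
      ∀ e, (univ.filter fun v => o v = e).card = (H e).card - 1 := by
  classical
  set T := Σ e : E, Fin ((H e).card - 1) with hT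
  set t : V → Finset T := fun v => univ.filter (fun p => v ∈ H p.1) with ht
  have hhall : ∀ s : Finset V, s.card ≤ (s.biUnion t).card := by
    intro s
    have hbU : s.biUnion t = univ.filter (fun p : T => ((H p.1) ∩ s).Nonempty) := by
      ext p
      simp only [Finset.mem_biUnion, ht, Finset.mem_filter, Finset.mem_univ, true_and]
      constructor
      · rintro ⟨v, hv, hp⟩; exact ⟨v, Finset.mem_inter.mpr ⟨hp, hv⟩⟩
      · rintro ⟨v, hv⟩
        rw [Finset.mem_inter] at hv
        exact ⟨v, hv.2, hv.1⟩
    rw [hbU, slot_filter_card H (fun e => ((H e) ∩ s).Nonempty)]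
    exact hall_condition H hcard hconn heq s
  obtain ⟨f, hfinj, hft⟩ := (Finset.all_card_le_biUnion_card_iff_exists_injective t).mp hhall
  refine ⟨fun v => (f v).1, fun v => ?_, ?_⟩
  · have := hft v
    rw [ht] at this
    simpa using this
  · -- fiber cards
    have hle : ∀ e, (univ.filter fun v => (f v).1 = e).card ≤ (H e).card - 1 := by
      intro e
      have : (univ.filter fun v => (f v).1 = e).card
          ≤ (univ.filter (fun p : T => p.1 = e)).card := by
        refine Finset.card_le_card_of_injOn f ?_ ?_
        · intro v hv
          simp only [Finset.mem_coe, Finset.mem_filter, Finset.mem_univ, true_and] at hv ⊢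
          exact hv
        · intro a _ b _ hab; exact hfinj hab
      rw [slot_filter_card H (fun e' => e' = e)] at this
      simpa [Finset.filter_eq'] using this
    have hsum : ∑ e : E, (univ.filter fun v => (f v).1 = e).card = Fintype.card V := by
      rw [← Finset.card_univ]
      exact (Finset.card_eq_sum_card_fiberwise (fun v _ => Finset.mem_univ ((f v).1))).symm
    intro e
    by_contra hne
    have hlt : (univ.filter fun v => (f v).1 = e).card < (H e).card - 1 :=
      lt_of_le_of_ne (hle e) hne
    have : ∑ e : E, (univ.filter fun v => (f v).1 = e).card < ∑ e : E, ((H e).card - 1) :=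
      Finset.sum_lt_sum (fun i _ => hle i) ⟨e, Finset.mem_univ e, hlt⟩
    omega
end TwoGoodAux3

section TwoGoodAux4
variable {V E : Type*} [DecidableEq E] [Fintype V] [Fintype E] [Nonempty V]

lemma rotate_good (H : E → Finset V) (o : V → E)
    (hcard : ∀ e, 2 ≤ (H e).card)
    (hmem : ∀ v, v ∈ H (o v))
    (hfib : ∀ e, (univ.filter fun v => o v = e).card = (H e).card - 1) :
    ∃ o' : V → E, o' ≠ o ∧ (∀ v, v ∈ H (o' v)) ∧
      ∀ e, (univ.filter fun v => o' v = e).card = (H e).card - 1 := by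
  classical
  -- the vertex of each edge not oriented to it
  have hm : ∀ e : E, ∃ v, v ∈ H e ∧ o v ≠ e := by
    intro e
    have hsub : (univ.filter fun v => o v = e) ⊆ H e := by
      intro v hv
      have := (Finset.mem_filter.mp hv).2
      simpa [this] using hmem v
    have hDne : ((H e) \ (univ.filter fun v => o v = e)).Nonempty := by
      rw [Finset.sdiff_nonempty]
      intro hsub'
      have h1 := Finset.card_le_card hsub'
      have := hfib e; have := hcard e; omega
    obtain ⟨v, hv⟩ := hDne
    rw [Finset.mem_sdiff, Finset.mem_filter] at hv
    refine ⟨v, hv.1, fun h => hv.2 ⟨Finset.mem_univ v, h⟩⟩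
  choose m hm1 hm2 using hm
  set ψ : V → V := fun v => m (o v) with hψ
  have hψ1 : ∀ v, ψ v ∈ H (o v) := fun v => hm1 (o v)
  have hψ2 : ∀ v, o (ψ v) ≠ o v := fun v => hm2 (o v)
  have hψ3 : ∀ v, ψ v ≠ v := fun v h => hψ2 v (by rw [h])
  -- find a periodic point
  have hper : ∃ (x : V) (n : ℕ), 0 < n ∧ ψ^[n] x = x := by
    obtain ⟨v₀⟩ := ‹Nonempty V›
    have : ¬ Function.Injective (fun k : Fin (Fintype.card V + 1) => ψ^[(k : ℕ)] v₀) := by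
      intro hinj
      have := Fintype.card_le_of_injective _ hinj
      simp at this
    rw [Function.not_injective_iff] at this
    obtain ⟨a, b, hab, hne⟩ := this
    rcases Nat.lt_or_ge (a : ℕ) (b : ℕ) with h | h
    · refine ⟨ψ^[(a : ℕ)] v₀, (b : ℕ) - (a : ℕ), by omega, ?_⟩
      rw [← Function.iterate_add_apply]
      rw [show (b : ℕ) - (a : ℕ) + (a : ℕ) = (b : ℕ) by omega]
      exact hab.symm
    · have h' : (b : ℕ) < (a : ℕ) := by
        rcases Nat.lt_or_ge (b : ℕ) (a : ℕ) with h' | h'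
        · exact h'
        · exact absurd (Fin.ext (le_antisymm h' h)) hne
      refine ⟨ψ^[(b : ℕ)] v₀, (a : ℕ) - (b : ℕ), by omega, ?_⟩
      rw [← Function.iterate_add_apply]
      rw [show (a : ℕ) - (b : ℕ) + (b : ℕ) = (a : ℕ) by omega]
      exact hab
  obtain ⟨x, n₀, hn₀, hx₀⟩ := hper
  -- minimal period
  have hPex : ∃ n, 0 < n ∧ ψ^[n] x = x := ⟨n₀, hn₀, hx₀⟩
  set n := Nat.find hPex with hn
  obtain ⟨hnpos, hnx⟩ : 0 < n ∧ ψ^[n] x = x := Nat.find_spec hPex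
  have hmin : ∀ k, k < n → ¬(0 < k ∧ ψ^[k] x = x) := fun k hk => Nat.find_min hPex hk
  -- iterates reduce mod n
  have hred : ∀ m : ℕ, ψ^[m] x = ψ^[m % n] x := by
    intro m
    induction m using Nat.strong_induction_on with
    | _ m ih =>
      rcases Nat.lt_or_ge m n with h | h
      · rw [Nat.mod_eq_of_lt h]
      · have h1 : ψ^[m] x = ψ^[m - n] x := by
          conv_lhs => rw [show m = (m - n) + n by omega]
          rw [Function.iterate_add_apply, hnx]
        rw [h1, ih (m - n) (by omega), ← Nat.mod_eq_sub_mod h]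
  -- distinct points on the orbit
  have hdist : ∀ a b, a < n → b < n → ψ^[a] x = ψ^[b] x → a = b := by
    have key : ∀ a b, a ≤ b → b < n → ψ^[a] x = ψ^[b] x → a = b := by
      intro a b hab hbn hEq
      by_contra hne
      have hlt : a < b := lt_of_le_of_ne hab hne
      have : ψ^[(n - b) + a] x = x := by
        rw [Function.iterate_add_apply, hEq, ← Function.iterate_add_apply]
        rw [show n - b + b = n by omega]
        exact hnx
      exact hmin (n - b + a) (by omega) ⟨by omega, this⟩
    intro a b ha hb hEq
    rcases le_or_gt a b with h | h
    · exact key a b h hb hEq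
    · exact (key b a (le_of_lt h) ha hEq.symm).symm
  set orb : Finset V := (Finset.range n).image (fun k => ψ^[k] x) with horb
  have horbmem : ∀ v, v ∈ orb ↔ ∃ k, k < n ∧ ψ^[k] x = v := by
    intro v
    simp [horb, Finset.mem_image, Finset.mem_range]
  have horbit : ∀ m : ℕ, ψ^[m] x ∈ orb := by
    intro m
    rw [horbmem]
    exact ⟨m % n, Nat.mod_lt _ hnpos, (hred m).symm⟩
  have hiter_orb : ∀ v ∈ orb, ∀ j, ψ^[j] v ∈ orb := by
    intro v hv j
    obtain ⟨k, hk, rfl⟩ := (horbmem v).mp hv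
    rw [← Function.iterate_add_apply]
    exact horbit _
  have hψn : ∀ v ∈ orb, ψ^[n] v = v := by
    intro v hv
    obtain ⟨k, hk, rfl⟩ := (horbmem v).mp hv
    rw [← Function.iterate_add_apply, Nat.add_comm, Function.iterate_add_apply, hnx]
  set π : V → V := fun v => if v ∈ orb then ψ^[n-1] v else v with hπ
  set ρ : V → V := fun v => if v ∈ orb then ψ v else v with hρ
  have hπρ : ∀ v, π (ρ v) = v := by
    intro v
    by_cases hv : v ∈ orb
    · have h1 : ψ v ∈ orb := by
        have := hiter_orb v hv 1; simpa using this
      simp only [hρ, hπ, if_pos hv, if_pos h1]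
      rw [← Function.iterate_succ_apply ψ (n-1) v, Nat.succ_eq_add_one,
        show n - 1 + 1 = n by omega]
      exact hψn v hv
    · have h1 : ρ v = v := by simp [hρ, if_neg hv]
      rw [h1]; simp [hπ, if_neg hv]
  have hρπ : ∀ v, ρ (π v) = v := by
    intro v
    by_cases hv : v ∈ orb
    · have h1 : ψ^[n-1] v ∈ orb := hiter_orb v hv _
      simp only [hπ, hρ, if_pos hv, if_pos h1]
      rw [← Function.iterate_succ_apply' ψ (n-1) v, Nat.succ_eq_add_one,
        show n - 1 + 1 = n by omega]
      exact hψn v hv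
    · simp [hπ, hρ, if_neg hv]
  set eqv : V ≃ V := ⟨π, ρ, fun v => hρπ v, fun v => hπρ v⟩ with heqv
  refine ⟨fun v => o (π v), ?_, ?_, ?_⟩
  · -- different from o at x
    intro hEq
    have hxorb : x ∈ orb := by
      rw [horbmem]; exact ⟨0, hnpos, rfl⟩
    have h1 : o (π x) = o x := congrFun hEq x
    have h2 : ψ (π x) = ψ x := by
      simp only [hψ]
      rw [h1]
    have h3 : π x = ψ^[n-1] x := by simp [hπ, if_pos hxorb]
    rw [h3, ← Function.iterate_succ_apply' ψ (n-1) x, Nat.succ_eq_add_one,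
      show n - 1 + 1 = n by omega, hnx] at h2
    exact hψ3 x h2.symm
  · -- membership
    intro v
    by_cases hv : v ∈ orb
    · have h3 : π v = ψ^[n-1] v := by simp [hπ, if_pos hv]
      have h4 : ψ (π v) = v := by
        rw [h3, ← Function.iterate_succ_apply' ψ (n-1) v, Nat.succ_eq_add_one,
          show n - 1 + 1 = n by omega]
        exact hψn v hv
      have := hψ1 (π v)
      rwa [h4] at this
    · simp only [hπ, if_neg hv]
      exact hmem v
  · -- fiber cardinalities via the bijection
    intro e
    rw [← hfib e]
    refine Finset.card_bij (fun v _ => π v) ?_ ?_ ?_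
    · intro a ha
      rw [Finset.mem_filter] at ha ⊢
      exact ⟨Finset.mem_univ _, ha.2⟩
    · intro a _ b _ hab
      have := congrArg ρ hab
      rwa [hρπ, hρπ] at this
    · intro b hb
      refine ⟨ρ b, ?_, hπρ b⟩
      rw [Finset.mem_filter] at hb ⊢
      refine ⟨Finset.mem_univ _, ?_⟩
      show o (π (ρ b)) = e
      rw [hπρ b]
      exact hb.2
end TwoGoodAux4

/-- A connected finite hypergraph with `e(G) = v(G)` has at least two distinct good
orientations. -/
theorem two_good_orientations {V E : Type*} [Fintype V] [Fintype E] [DecidableEq E]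
    [Nonempty V] (H : E → Finset V)
    (hcard : ∀ e, 2 ≤ (H e).card)
    (hconn : HConnected H)
    (heq : ∑ e : E, ((H e).card - 1) = Fintype.card V) :
    ∃ o₁ o₂ : V → E, o₁ ≠ o₂ ∧ GoodOrientation H o₁ ∧ GoodOrientation H o₂ := by
  classical
  obtain ⟨o, hmem, hfib⟩ := exists_good H hcard (fun u v => hconn u v) heq
  obtain ⟨o', hne, hmem', hfib'⟩ := rotate_good H o hcard hmem hfib
  have hsurj : ∀ (f : V → E),
      (∀ e, (univ.filter fun v => f v = e).card = (H e).card - 1) →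
      Function.Surjective f := by
    intro f hf e
    have hpos : 0 < (univ.filter fun v => f v = e).card := by
      rw [hf e]; have := hcard e; omega
    obtain ⟨v, hv⟩ := Finset.card_pos.mp hpos
    exact ⟨v, (Finset.mem_filter.mp hv).2⟩
  exact ⟨o', o, hne, ⟨hsurj o' hfib', hmem', hfib'⟩, ⟨hsurj o hfib, hmem, hfib⟩⟩
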